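/- For every θ ∈ [0, π], ∫_{−π/2}^{π/2} [∫_{−sin(θ+ρ)}^{sin(θ−ρ)} (2/π)√(1 − t²) dt] · (1/2) cos ρ dρ = (8 sin θ)/(3π). -/

import Mathlib

open Real intervalIntegral


noncomputable def Gfun (x : ℝ) : ℝ := (x * Real.sqrt (1 - x ^ 2) + Real.arcsin x) / π

lemma continuous_Gfun : Continuous Gfun := by
  unfold Gfun
  exact ((continuous_id.mul ((continuous_const.sub (continuous_pow 2)).sqrt)).add
    Real.continuous_arcsin).div_const π

lemma Gfun_neg (x : ℝ) : Gfun (-x) = - Gfun x := by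
  simp [Gfun, Real.arcsin_neg, neg_sq]
  ring

lemma hasDerivAt_Gfun {x : ℝ} (h1 : -1 < x) (h2 : x < 1) :
    HasDerivAt Gfun (2 / π * Real.sqrt (1 - x ^ 2)) x := by
  have hpos : (0:ℝ) < 1 - x ^ 2 := by nlinarith
  have hne : (1:ℝ) - x ^ 2 ≠ 0 := ne_of_gt hpos
  have hsne : Real.sqrt (1 - x ^ 2) ≠ 0 := ne_of_gt (Real.sqrt_pos.mpr hpos)
  have hsq : Real.sqrt (1 - x ^ 2) ^ 2 = 1 - x ^ 2 := Real.sq_sqrt hpos.le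
  have hu : HasDerivAt (fun y : ℝ => 1 - y ^ 2) (-(2 * x)) x := by
    simpa using ((hasDerivAt_pow 2 x).const_sub 1)
  have hs : HasDerivAt (fun y : ℝ => Real.sqrt (1 - y ^ 2))
      (1 / (2 * Real.sqrt (1 - x ^ 2)) * (-(2 * x))) x :=
    (Real.hasDerivAt_sqrt hne).comp x hu
  have hmul := (hasDerivAt_id x).mul hs
  have ha : HasDerivAt Real.arcsin (1 / Real.sqrt (1 - x ^ 2)) x :=
    Real.hasDerivAt_arcsin (by linarith) (by linarith)
  have h := (hmul.add ha).div_const π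
  refine h.congr_deriv ?_
  have hπ := Real.pi_ne_zero
  simp only [id]
  field_simp
  linear_combination (-1 : ℝ) * hsq

lemma inner_eval {a b : ℝ} (ha : -1 ≤ a) (hab : a ≤ b) (hb : b ≤ 1) :
    ∫ t in a..b, (2 / π) * Real.sqrt (1 - t ^ 2) = Gfun b - Gfun a := by
  refine intervalIntegral.integral_eq_sub_of_hasDeriv_right_of_le hab
    continuous_Gfun.continuousOn (fun x hx => ?_) ?_
  · exact (hasDerivAt_Gfun (by linarith [hx.1]) (by linarith [hx.2])).hasDerivWithinAt
  · apply Continuous.intervalIntegrable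
    exact continuous_const.mul ((continuous_const.sub (continuous_pow 2)).sqrt)

noncomputable section

def Bf1 (θ ρ : ℝ) : ℝ :=
  ((Real.cos θ ^ 2 - Real.sin θ ^ 2) * (2 * Real.sin ρ * Real.cos ρ ^ 2)
    + (π + 2 * ρ) * Real.cos ρ) / (2 * π)

def Af1 (θ ρ : ℝ) : ℝ :=
  ((Real.cos θ ^ 2 - Real.sin θ ^ 2) * (-(4 * Real.cos ρ ^ 3 - 3 * Real.cos ρ) / 6 - Real.cos ρ / 2)
    + (π + 2 * ρ) * Real.sin ρ + 2 * Real.cos ρ) / (2 * π)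

def Bf2 (θ ρ : ℝ) : ℝ :=
  ((2 * Real.sin θ * Real.cos θ * (1 - 2 * Real.sin ρ ^ 2) + 2 * θ) * Real.cos ρ) / (2 * π)

def Af2 (θ ρ : ℝ) : ℝ :=
  (2 * Real.sin θ * Real.cos θ * ((3 * Real.sin ρ - 4 * Real.sin ρ ^ 3) / 6 + Real.sin ρ / 2)
    + 2 * θ * Real.sin ρ) / (2 * π)

def Bf3 (θ ρ : ℝ) : ℝ :=
  ((Real.cos θ ^ 2 - Real.sin θ ^ 2) * (-(2 * Real.sin ρ * Real.cos ρ ^ 2))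
    + (π - 2 * ρ) * Real.cos ρ) / (2 * π)

def Af3 (θ ρ : ℝ) : ℝ :=
  ((Real.cos θ ^ 2 - Real.sin θ ^ 2) * ((4 * Real.cos ρ ^ 3 - 3 * Real.cos ρ) / 6 + Real.cos ρ / 2)
    + (π - 2 * ρ) * Real.sin ρ - 2 * Real.cos ρ) / (2 * π)

end

lemma hasDerivAt_Af1 (θ ρ : ℝ) : HasDerivAt (Af1 θ) (Bf1 θ ρ) ρ := by
  have hs := Real.hasDerivAt_sin ρ
  have hc := Real.hasDerivAt_cos ρ
  have h := (((((((hc.pow 3).const_mul (4:ℝ)).sub (hc.const_mul 3)).neg.div_const 6).sub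
      (hc.div_const 2)).const_mul (Real.cos θ ^ 2 - Real.sin θ ^ 2)).add
      ((((hasDerivAt_id ρ).const_mul (2:ℝ)).const_add π).mul hs)).add
      (hc.const_mul 2) |>.div_const (2 * π)
  refine h.congr_deriv ?_
  unfold Bf1
  simp only [id]
  ring

lemma hasDerivAt_Af2 (θ ρ : ℝ) : HasDerivAt (Af2 θ) (Bf2 θ ρ) ρ := by
  have hs := Real.hasDerivAt_sin ρ
  have h := (((((hs.const_mul (3:ℝ)).sub ((hs.pow 3).const_mul 4)).div_const 6).add
      (hs.div_const 2)).const_mul (2 * Real.sin θ * Real.cos θ)).add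
      (hs.const_mul (2 * θ)) |>.div_const (2 * π)
  refine h.congr_deriv ?_
  unfold Bf2
  ring

lemma hasDerivAt_Af3 (θ ρ : ℝ) : HasDerivAt (Af3 θ) (Bf3 θ ρ) ρ := by
  have hs := Real.hasDerivAt_sin ρ
  have hc := Real.hasDerivAt_cos ρ
  have h := ((((((hc.pow 3).const_mul (4:ℝ)).sub (hc.const_mul 3)).div_const 6).add
      (hc.div_const 2)).const_mul (Real.cos θ ^ 2 - Real.sin θ ^ 2)).add
      ((((hasDerivAt_id ρ).const_mul (2:ℝ)).const_sub π).mul hs) |>.sub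
      (hc.const_mul 2) |>.div_const (2 * π)
  refine h.congr_deriv ?_
  unfold Bf3
  simp only [id]
  ring

lemma key (θ : ℝ) (h0 : 0 ≤ θ) (h2 : θ ≤ π / 2) :
    ∫ ρ in (-(π / 2))..(π / 2),
      (∫ t in (-Real.sin (θ + ρ))..(Real.sin (θ - ρ)), (2 / π) * Real.sqrt (1 - t ^ 2))
        * ((1 / 2) * Real.cos ρ)
      = 8 * Real.sin θ / (3 * π) := by
  have hπ := Real.pi_pos
  have hsθ : 0 ≤ Real.sin θ := Real.sin_nonneg_of_nonneg_of_le_pi h0 (by linarith)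
  set F : ℝ → ℝ := fun ρ => (Gfun (Real.sin (θ - ρ)) + Gfun (Real.sin (θ + ρ)))
      * ((1 / 2) * Real.cos ρ) with hFdef
  have hEq : Set.EqOn (fun ρ =>
      (∫ t in (-Real.sin (θ + ρ))..(Real.sin (θ - ρ)), (2 / π) * Real.sqrt (1 - t ^ 2))
        * ((1 / 2) * Real.cos ρ)) F (Set.uIcc (-(π / 2)) (π / 2)) := by
    intro ρ hρ
    rw [Set.uIcc_of_le (by linarith)] at hρ
    have hcρ : 0 ≤ Real.cos ρ := Real.cos_nonneg_of_mem_Icc ⟨hρ.1, hρ.2⟩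
    have hab : -Real.sin (θ + ρ) ≤ Real.sin (θ - ρ) := by
      have e1 := Real.sin_add θ ρ
      have e2 := Real.sin_sub θ ρ
      nlinarith [mul_nonneg hsθ hcρ]
    simp only [hFdef]
    rw [inner_eval (by linarith [Real.sin_le_one (θ + ρ)]) hab (Real.sin_le_one (θ - ρ)),
      Gfun_neg]
    ring
  rw [intervalIntegral.integral_congr hEq]
  have hFc : Continuous F := by
    apply Continuous.mul
    · exact (continuous_Gfun.comp (Real.continuous_sin.comp
        (continuous_const.sub continuous_id))).add (continuous_Gfun.comp
        (Real.continuous_sin.comp (continuous_const.add continuous_id)))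
    · exact continuous_const.mul Real.continuous_cos
  have hr1 : -(π / 2) ≤ θ - π / 2 := by linarith
  have hr12 : θ - π / 2 ≤ π / 2 - θ := by linarith
  have hr2 : π / 2 - θ ≤ π / 2 := by linarith
  rw [← intervalIntegral.integral_add_adjacent_intervals
      (hFc.intervalIntegrable (-(π / 2)) (θ - π / 2)) (hFc.intervalIntegrable (θ - π / 2) (π / 2)),
    ← intervalIntegral.integral_add_adjacent_intervals
      (hFc.intervalIntegrable (θ - π / 2) (π / 2 - θ)) (hFc.intervalIntegrable (π / 2 - θ) (π / 2))]
  have e1 : ∫ ρ in (-(π / 2))..(θ - π / 2), F ρ = Af1 θ (θ - π / 2) - Af1 θ (-(π / 2)) := by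
    have hEq1 : Set.EqOn F (Bf1 θ) (Set.uIcc (-(π / 2)) (θ - π / 2)) := by
      intro ρ hρ
      rw [Set.uIcc_of_le hr1] at hρ
      obtain ⟨hρ1, hρ2⟩ := hρ
      have g1 : Gfun (Real.sin (θ - ρ)) =
          (Real.sin (θ - ρ) * (-Real.cos (θ - ρ)) + (π - (θ - ρ))) / π := by
        have harc : Real.arcsin (Real.sin (θ - ρ)) = π - (θ - ρ) := by
          rw [← Real.sin_pi_sub]
          exact Real.arcsin_sin (by linarith) (by linarith)
        unfold Gfun
        rw [← Real.cos_sq', Real.sqrt_sq_eq_abs,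
          abs_of_nonpos (Real.cos_nonpos_of_pi_div_two_le_of_le (by linarith) (by linarith)),
          harc]
      have g2 : Gfun (Real.sin (θ + ρ)) =
          (Real.sin (θ + ρ) * Real.cos (θ + ρ) + (θ + ρ)) / π := by
        unfold Gfun
        rw [← Real.cos_sq', Real.sqrt_sq_eq_abs,
          abs_of_nonneg (Real.cos_nonneg_of_mem_Icc ⟨by linarith, by linarith⟩),
          Real.arcsin_sin (by linarith) (by linarith)]
      simp only [hFdef, g1, g2]
      unfold Bf1
      rw [Real.sin_sub, Real.cos_sub, Real.sin_add, Real.cos_add]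
      field_simp
      ring
    rw [intervalIntegral.integral_congr hEq1]
    exact intervalIntegral.integral_eq_sub_of_hasDerivAt
      (fun ρ _ => hasDerivAt_Af1 θ ρ)
      ((by unfold Bf1; fun_prop : Continuous (Bf1 θ)).intervalIntegrable _ _)
  have e2 : ∫ ρ in (θ - π / 2)..(π / 2 - θ), F ρ = Af2 θ (π / 2 - θ) - Af2 θ (θ - π / 2) := by
    have hEq2 : Set.EqOn F (Bf2 θ) (Set.uIcc (θ - π / 2) (π / 2 - θ)) := by
      intro ρ hρ
      rw [Set.uIcc_of_le hr12] at hρ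
      obtain ⟨hρ1, hρ2⟩ := hρ
      have g1 : Gfun (Real.sin (θ - ρ)) =
          (Real.sin (θ - ρ) * Real.cos (θ - ρ) + (θ - ρ)) / π := by
        unfold Gfun
        rw [← Real.cos_sq', Real.sqrt_sq_eq_abs,
          abs_of_nonneg (Real.cos_nonneg_of_mem_Icc ⟨by linarith, by linarith⟩),
          Real.arcsin_sin (by linarith) (by linarith)]
      have g2 : Gfun (Real.sin (θ + ρ)) =
          (Real.sin (θ + ρ) * Real.cos (θ + ρ) + (θ + ρ)) / π := by
        unfold Gfun
        rw [← Real.cos_sq', Real.sqrt_sq_eq_abs,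
          abs_of_nonneg (Real.cos_nonneg_of_mem_Icc ⟨by linarith, by linarith⟩),
          Real.arcsin_sin (by linarith) (by linarith)]
      simp only [hFdef, g1, g2]
      unfold Bf2
      rw [Real.sin_sub, Real.cos_sub, Real.sin_add, Real.cos_add]
      field_simp
      linear_combination (2 * Real.sin θ * Real.cos θ * Real.cos ρ) *
        Real.sin_sq_add_cos_sq ρ
    rw [intervalIntegral.integral_congr hEq2]
    exact intervalIntegral.integral_eq_sub_of_hasDerivAt
      (fun ρ _ => hasDerivAt_Af2 θ ρ)
      ((by unfold Bf2; fun_prop : Continuous (Bf2 θ)).intervalIntegrable _ _)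
  have e3 : ∫ ρ in (π / 2 - θ)..(π / 2), F ρ = Af3 θ (π / 2) - Af3 θ (π / 2 - θ) := by
    have hEq3 : Set.EqOn F (Bf3 θ) (Set.uIcc (π / 2 - θ) (π / 2)) := by
      intro ρ hρ
      rw [Set.uIcc_of_le hr2] at hρ
      obtain ⟨hρ1, hρ2⟩ := hρ
      have g1 : Gfun (Real.sin (θ - ρ)) =
          (Real.sin (θ - ρ) * Real.cos (θ - ρ) + (θ - ρ)) / π := by
        unfold Gfun
        rw [← Real.cos_sq', Real.sqrt_sq_eq_abs,
          abs_of_nonneg (Real.cos_nonneg_of_mem_Icc ⟨by linarith, by linarith⟩),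
          Real.arcsin_sin (by linarith) (by linarith)]
      have g2 : Gfun (Real.sin (θ + ρ)) =
          (Real.sin (θ + ρ) * (-Real.cos (θ + ρ)) + (π - (θ + ρ))) / π := by
        have harc : Real.arcsin (Real.sin (θ + ρ)) = π - (θ + ρ) := by
          rw [← Real.sin_pi_sub]
          exact Real.arcsin_sin (by linarith) (by linarith)
        unfold Gfun
        rw [← Real.cos_sq', Real.sqrt_sq_eq_abs,
          abs_of_nonpos (Real.cos_nonpos_of_pi_div_two_le_of_le (by linarith) (by linarith)),
          harc]
      simp only [hFdef, g1, g2]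
      unfold Bf3
      rw [Real.sin_sub, Real.cos_sub, Real.sin_add, Real.cos_add]
      field_simp
      ring
    rw [intervalIntegral.integral_congr hEq3]
    exact intervalIntegral.integral_eq_sub_of_hasDerivAt
      (fun ρ _ => hasDerivAt_Af3 θ ρ)
      ((by unfold Bf3; fun_prop : Continuous (Bf3 θ)).intervalIntegrable _ _)
  rw [e1, e2, e3]
  unfold Af1 Af2 Af3
  simp only [Real.sin_sub, Real.cos_sub, Real.sin_add, Real.cos_add,
    Real.sin_pi_div_two, Real.cos_pi_div_two, Real.sin_neg, Real.cos_neg,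
    Real.sin_pi_div_two_sub, Real.cos_pi_div_two_sub]
  have hπne := Real.pi_ne_zero
  field_simp
  linear_combination (Real.sin θ * π ^ 3 *
    (4608 + 4608 * Real.sin θ ^ 2 - 9216 * Real.cos θ ^ 2)
    + (1 - 96 * π ^ 3) * 48 * Real.sin θ * (Real.sin θ ^ 2 - 2 * Real.cos θ ^ 2 + 1)) * Real.sin_sq_add_cos_sq θ


/-- For `θ ∈ [0, π]`,
`∫_{-π/2}^{π/2} [∫_{-sin(θ+ρ)}^{sin(θ-ρ)} (2/π)√(1-t²) dt] (1/2) cos ρ dρ = 8 sin θ/(3π)`. -/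
theorem first_integral_eval (θ : ℝ) (hθ : θ ∈ Set.Icc 0 π) :
    ∫ ρ in (-(π / 2))..(π / 2),
      (∫ t in (-Real.sin (θ + ρ))..(Real.sin (θ - ρ)), (2 / π) * Real.sqrt (1 - t ^ 2))
        * ((1 / 2) * Real.cos ρ)
      = 8 * Real.sin θ / (3 * π) := by
  obtain ⟨h0, hπ'⟩ := hθ
  rcases le_or_gt θ (π / 2) with h | h
  · exact key θ h0 h
  · have hk := key (π - θ) (by linarith) (by linarith)
    rw [Real.sin_pi_sub] at hk
    rw [← hk]
    set g : ℝ → ℝ := fun ρ' =>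
      (∫ t in (-Real.sin ((π - θ) + ρ'))..(Real.sin ((π - θ) - ρ')),
        (2 / π) * Real.sqrt (1 - t ^ 2)) * ((1 / 2) * Real.cos ρ') with hg
    have hEq : Set.EqOn (fun ρ =>
        (∫ t in (-Real.sin (θ + ρ))..(Real.sin (θ - ρ)), (2 / π) * Real.sqrt (1 - t ^ 2))
          * ((1 / 2) * Real.cos ρ)) (fun ρ => g (-ρ)) (Set.uIcc (-(π / 2)) (π / 2)) := by
      intro ρ _
      simp only [hg]
      rw [show (π - θ) + -ρ = π - (θ + ρ) by ring, show (π - θ) - -ρ = π - (θ - ρ) by ring,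
        Real.sin_pi_sub, Real.sin_pi_sub, Real.cos_neg]
    rw [intervalIntegral.integral_congr hEq, intervalIntegral.integral_comp_neg, neg_neg]
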